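/- For the sine-Wiener process ξ(t) = σ·sin(√(2/τ)·W_t) with σ, τ > 0, the covariance function satisfies, for 0 ≤ s ≤ t, E[ξ(t)ξ(s)] = (σ²/2)·exp(−(t−s)/τ)·(1 − exp(−4s/τ)). -/

import Mathlib

open MeasureTheory ProbabilityTheory
open scoped ENNReal NNReal Real

lemma integral_cos_gaussianReal (v : ℝ≥0) (c : ℝ) :
    ∫ x, Real.cos (c * x) ∂(gaussianReal 0 v) = Real.exp (-(c ^ 2 * v) / 2) := by
  by_cases hv : v = 0
  · simp [hv, gaussianReal_zero_var]
  · have hv' : (0:ℝ) < v := lt_of_le_of_ne (v.coe_nonneg) (by exact_mod_cast (Ne.symm hv))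
    rw [gaussianReal_of_var_ne_zero 0 hv]
    have hpdf : (gaussianPDF 0 v) = fun x => ((Real.toNNReal (gaussianPDFReal 0 v x) : ℝ≥0) : ℝ≥0∞) := by
      funext x; rfl
    rw [hpdf, integral_withDensity_eq_integral_smul
      ((measurable_gaussianPDFReal 0 v).real_toNNReal) _]
    have hsmul : ∀ x : ℝ, (Real.toNNReal (gaussianPDFReal 0 v x)) • Real.cos (c * x)
        = gaussianPDFReal 0 v x * Real.cos (c * x) := by
      intro x
      rw [NNReal.smul_def, smul_eq_mul, Real.coe_toNNReal _ (gaussianPDFReal_nonneg 0 v x)]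
    simp_rw [hsmul]
    -- now compute ∫ x, pdf x * cos (c x)
    set b : ℂ := ((1 / (2 * (v:ℝ)) : ℝ) : ℂ) with hb
    have hbre : (0:ℝ) < b.re := by
      rw [hb]; simp; positivity
    have hint := integral_cexp_quadratic (b := -b) (by simpa using hbre) (Complex.I * c) 0
    have hintg : Integrable (fun x : ℝ => Complex.exp (-b * x ^ 2 + (Complex.I * c) * x + 0)) :=
      integrable_cexp_quadratic hbre _ _
    have key : ∀ x : ℝ, gaussianPDFReal 0 v x * Real.cos (c * x)
        = (Real.sqrt (2 * π * v))⁻¹ * (Complex.exp (-b * x ^ 2 + (Complex.I * c) * x + 0)).re := by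
      intro x
      have hre : (-b * x ^ 2 + (Complex.I * c) * x + 0).re = -(x - 0)^2 / (2 * v) := by
        simp [hb, ← Complex.ofReal_pow]
        field_simp
      have him : (-b * x ^ 2 + (Complex.I * c) * x + 0).im = c * x := by
        simp [hb, ← Complex.ofReal_pow]
      rw [Complex.exp_re, hre, him, gaussianPDFReal]
      ring
    simp_rw [key]
    rw [integral_const_mul, ← RCLike.re_eq_complex_re, integral_re hintg,
      RCLike.re_eq_complex_re, hint]
    -- evaluate the closed form
    have h1 : ((π:ℂ) / -(-b)) ^ (1 / 2 : ℂ) = (Real.sqrt (2 * π * v) : ℂ) := by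
      rw [neg_neg, hb]
      have : (π:ℂ) / ((1 / (2 * (v:ℝ)) : ℝ) : ℂ) = ((2 * π * v : ℝ) : ℂ) := by
        push_cast
        field_simp
      rw [this, show ((1:ℂ)/2) = ((1/2 : ℝ) : ℂ) by norm_num,
        ← Complex.ofReal_cpow (by positivity), Real.sqrt_eq_rpow]
    have h2 : Complex.exp (0 - (Complex.I * c) ^ 2 / (4 * -b)) = (Real.exp (-(c ^ 2 * v) / 2) : ℂ) := by
      have harg : (0 : ℂ) - (Complex.I * c) ^ 2 / (4 * -b) = ((-(c ^ 2 * (v:ℝ)) / 2 : ℝ) : ℂ) := by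
        rw [hb]
        have hI : (Complex.I * (c:ℂ)) ^ 2 = -(c:ℂ) ^ 2 := by
          rw [mul_pow, Complex.I_sq]; ring
        rw [hI]
        have hv0 : ((v:ℝ):ℂ) ≠ 0 := by exact_mod_cast ne_of_gt hv'
        push_cast
        field_simp
        ring
      rw [harg]
      exact (Complex.ofReal_exp _).symm
    rw [h1, h2]
    have : ((Real.sqrt (2 * π * v) : ℂ) * (Real.exp (-(c ^ 2 * v) / 2) : ℂ)).re
        = Real.sqrt (2 * π * v) * Real.exp (-(c ^ 2 * v) / 2) := by
      norm_cast
    rw [this]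
    rw [← mul_assoc, inv_mul_cancel₀ (by positivity), one_mul]

lemma integral_sin_gaussianReal (v : ℝ≥0) (c : ℝ) :
    ∫ x, Real.sin (c * x) ∂(gaussianReal 0 v) = 0 := by
  have hmap : (gaussianReal 0 v).map (fun x : ℝ => -1 * x) = gaussianReal 0 v := by
    rw [gaussianReal_map_const_mul (-1)]
    norm_num
  have hsm : AEStronglyMeasurable (fun x : ℝ => Real.sin (c * x))
      ((gaussianReal 0 v).map (fun x : ℝ => -1 * x)) :=
    (Real.measurable_sin.comp (measurable_id.const_mul c)).aestronglyMeasurable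
  have h1 : ∫ x, Real.sin (c * x) ∂(gaussianReal 0 v)
      = ∫ x, Real.sin (c * (-1 * x)) ∂(gaussianReal 0 v) := by
    conv_lhs => rw [← hmap]
    exact integral_map (by fun_prop) hsm
  have h2 : ∀ x : ℝ, Real.sin (c * (-1 * x)) = - Real.sin (c * x) := by
    intro x
    rw [show c * (-1 * x) = -(c * x) by ring, Real.sin_neg]
  simp_rw [h2] at h1
  rw [integral_neg] at h1
  linarith

lemma integrable_of_bdd_meas {Ω : Type*} [MeasurableSpace Ω] {μ : Measure Ω}
    [IsProbabilityMeasure μ] {f : Ω → ℝ} (hm : Measurable f) (hb : ∀ ω, |f ω| ≤ 1) :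
    Integrable f μ := by
  refine (integrable_const (1:ℝ)).mono' hm.aestronglyMeasurable ?_
  filter_upwards with ω using by simpa using hb ω

/-- Covariance of sine-Wiener noise: for `0 ≤ s ≤ t`,
`E[ξ(t)ξ(s)] = (σ²/2)·exp(−(t−s)/τ)·(1 − exp(−4s/τ))`. -/
theorem sine_wiener_covariance {Ω : Type*} [MeasurableSpace Ω]
    (μ : Measure Ω) [IsProbabilityMeasure μ]
    (W : ℝ → Ω → ℝ) (σ τ : ℝ) (hσ : 0 < σ) (hτ : 0 < τ)
    (hWmeas : ∀ t, Measurable (W t))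
    (hWlaw : ∀ t : ℝ, 0 ≤ t → μ.map (W t) = gaussianReal 0 t.toNNReal)
    (hWinc : ∀ s t : ℝ, 0 ≤ s → s ≤ t →
      μ.map (fun ω => W t ω - W s ω) = gaussianReal 0 (t - s).toNNReal)
    (hWindep : ∀ s t : ℝ, 0 ≤ s → s ≤ t →
      IndepFun (fun ω => W t ω - W s ω) (W s) μ)
    (ξ : ℝ → Ω → ℝ)
    (hξ : ∀ t ω, ξ t ω = σ * Real.sin (Real.sqrt (2 / τ) * W t ω)) :
    ∀ s t : ℝ, 0 ≤ s → s ≤ t →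
      ∫ ω, ξ t ω * ξ s ω ∂μ =
        σ ^ 2 / 2 * Real.exp (-(t - s) / τ) * (1 - Real.exp (-(4 * s) / τ)) := by
  intro s t hs hst
  set a : ℝ := Real.sqrt (2 / τ) with haa
  have ha : a ^ 2 = 2 / τ := Real.sq_sqrt (by positivity)
  set X : Ω → ℝ := fun ω => W t ω - W s ω with hX
  set Y : Ω → ℝ := W s with hY
  have hXm : Measurable X := (hWmeas t).sub (hWmeas s)
  have hYm : Measurable Y := hWmeas s
  -- pointwise trigonometric identity
  have hpt : ∀ ω, ξ t ω * ξ s ω = σ ^ 2 *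
      (Real.cos (a * X ω) / 2 - Real.cos (a * X ω) * Real.cos (2 * a * Y ω) / 2
        + Real.sin (a * X ω) * Real.sin (2 * a * Y ω) / 2) := by
    intro ω
    rw [hξ t ω, hξ s ω]
    have hWt : a * W t ω = a * X ω + a * Y ω := by simp [hX, hY]; ring
    have hWs : a * W s ω = a * Y ω := rfl
    have h2Y : 2 * a * Y ω = a * Y ω + a * Y ω := by ring
    rw [hWt, hWs, h2Y, Real.sin_add, Real.cos_add, Real.sin_add]
    have hpy : Real.sin (a * Y ω) ^ 2 + Real.cos (a * Y ω) ^ 2 = 1 :=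
      Real.sin_sq_add_cos_sq _
    linear_combination (σ ^ 2 * Real.cos (a * X ω) / 2) * hpy
  -- expectation helpers
  have hts : ((t - s).toNNReal : ℝ) = t - s := Real.coe_toNNReal _ (sub_nonneg.2 hst)
  have hss : ((s).toNNReal : ℝ) = s := Real.coe_toNNReal _ hs
  have hmapX : μ.map X = gaussianReal 0 (t - s).toNNReal := hWinc s t hs hst
  have hmapY : μ.map Y = gaussianReal 0 s.toNNReal := hWlaw s hs
  have Ecos : ∀ (Z : Ω → ℝ) (v : ℝ≥0), Measurable Z → μ.map Z = gaussianReal 0 v →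
      ∀ c : ℝ, ∫ ω, Real.cos (c * Z ω) ∂μ = Real.exp (-(c ^ 2 * v) / 2) := by
    intro Z v hZ hmap c
    rw [← integral_cos_gaussianReal v c, ← hmap]
    exact (integral_map hZ.aemeasurable
      ((by fun_prop : Measurable fun x : ℝ => Real.cos (c * x)).aestronglyMeasurable)).symm
  have Esin : ∀ (Z : Ω → ℝ) (v : ℝ≥0), Measurable Z → μ.map Z = gaussianReal 0 v →
      ∀ c : ℝ, ∫ ω, Real.sin (c * Z ω) ∂μ = 0 := by
    intro Z v hZ hmap c
    rw [← integral_sin_gaussianReal v c, ← hmap]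
    exact (integral_map hZ.aemeasurable
      ((by fun_prop : Measurable fun x : ℝ => Real.sin (c * x)).aestronglyMeasurable)).symm
  -- independence
  have hind : IndepFun X Y μ := hWindep s t hs hst
  have hindcos : IndepFun (fun ω => Real.cos (a * X ω)) (fun ω => Real.cos (2 * a * Y ω)) μ :=
    hind.comp (Real.measurable_cos.comp (measurable_id.const_mul a))
      (Real.measurable_cos.comp (measurable_id.const_mul (2 * a)))
  have hindsin : IndepFun (fun ω => Real.sin (a * X ω)) (fun ω => Real.sin (2 * a * Y ω)) μ :=
    hind.comp (Real.measurable_sin.comp (measurable_id.const_mul a))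
      (Real.measurable_sin.comp (measurable_id.const_mul (2 * a)))
  -- individual integrals
  have I1 : ∫ ω, Real.cos (a * X ω) ∂μ = Real.exp (-(t - s) / τ) := by
    rw [Ecos X _ hXm hmapX a]
    congr 1
    rw [hts, ha]
    field_simp
  have I2 : ∫ ω, Real.cos (a * X ω) * Real.cos (2 * a * Y ω) ∂μ
      = Real.exp (-(t - s) / τ) * Real.exp (-(4 * s) / τ) := by
    have hmul : ∫ ω, Real.cos (a * X ω) * Real.cos (2 * a * Y ω) ∂μ
        = (∫ ω, Real.cos (a * X ω) ∂μ) * ∫ ω, Real.cos (2 * a * Y ω) ∂μ :=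
      hindcos.integral_fun_mul_eq_mul_integral
        ((Real.measurable_cos.comp (hXm.const_mul a)).aestronglyMeasurable)
        ((Real.measurable_cos.comp (hYm.const_mul (2 * a))).aestronglyMeasurable)
    rw [hmul, Ecos X _ hXm hmapX a, Ecos Y _ hYm hmapY (2 * a)]
    congr 2
    · rw [hts, ha]; field_simp
    · rw [hss]
      rw [show (2 * a) ^ 2 = 4 * (2 / τ) by rw [← ha]; ring]
      field_simp
  have I3 : ∫ ω, Real.sin (a * X ω) * Real.sin (2 * a * Y ω) ∂μ = 0 := by
    have hmul : ∫ ω, Real.sin (a * X ω) * Real.sin (2 * a * Y ω) ∂μ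
        = (∫ ω, Real.sin (a * X ω) ∂μ) * ∫ ω, Real.sin (2 * a * Y ω) ∂μ :=
      hindsin.integral_fun_mul_eq_mul_integral
        ((Real.measurable_sin.comp (hXm.const_mul a)).aestronglyMeasurable)
        ((Real.measurable_sin.comp (hYm.const_mul (2 * a))).aestronglyMeasurable)
    rw [hmul, Esin X _ hXm hmapX a, zero_mul]
  -- integrability
  have int1 : Integrable (fun ω => Real.cos (a * X ω)) μ :=
    integrable_of_bdd_meas (Real.measurable_cos.comp (hXm.const_mul a))
      (fun ω => Real.abs_cos_le_one _)
  have int2 : Integrable (fun ω => Real.cos (a * X ω) * Real.cos (2 * a * Y ω)) μ := by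
    refine integrable_of_bdd_meas
      ((Real.measurable_cos.comp (hXm.const_mul a)).mul
        (Real.measurable_cos.comp (hYm.const_mul (2 * a)))) (fun ω => ?_)
    rw [abs_mul]
    exact mul_le_one₀ (Real.abs_cos_le_one _) (abs_nonneg _) (Real.abs_cos_le_one _)
  have int3 : Integrable (fun ω => Real.sin (a * X ω) * Real.sin (2 * a * Y ω)) μ := by
    refine integrable_of_bdd_meas
      ((Real.measurable_sin.comp (hXm.const_mul a)).mul
        (Real.measurable_sin.comp (hYm.const_mul (2 * a)))) (fun ω => ?_)
    rw [abs_mul]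
    exact mul_le_one₀ (Real.abs_sin_le_one _) (abs_nonneg _) (Real.abs_sin_le_one _)
  -- assemble
  calc ∫ ω, ξ t ω * ξ s ω ∂μ
      = ∫ ω, σ ^ 2 *
        (Real.cos (a * X ω) / 2 - Real.cos (a * X ω) * Real.cos (2 * a * Y ω) / 2
          + Real.sin (a * X ω) * Real.sin (2 * a * Y ω) / 2) ∂μ := by
        exact integral_congr_ae (Filter.Eventually.of_forall hpt)
    _ = σ ^ 2 * ((∫ ω, Real.cos (a * X ω) ∂μ) / 2
          - (∫ ω, Real.cos (a * X ω) * Real.cos (2 * a * Y ω) ∂μ) / 2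
          + (∫ ω, Real.sin (a * X ω) * Real.sin (2 * a * Y ω) ∂μ) / 2) := by
        rw [integral_const_mul]
        congr 1
        have intA : Integrable (fun ω => Real.cos (a * X ω) / 2
            - Real.cos (a * X ω) * Real.cos (2 * a * Y ω) / 2) μ :=
          (int1.div_const 2).sub (int2.div_const 2)
        have intB : Integrable (fun ω => Real.sin (a * X ω) * Real.sin (2 * a * Y ω) / 2) μ :=
          int3.div_const 2
        have intC : Integrable (fun ω => Real.cos (a * X ω) / 2) μ := int1.div_const 2
        have intD : Integrable
            (fun ω => Real.cos (a * X ω) * Real.cos (2 * a * Y ω) / 2) μ := int2.div_const 2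
        rw [integral_add intA intB, integral_sub intC intD,
          integral_div, integral_div, integral_div]
    _ = σ ^ 2 / 2 * Real.exp (-(t - s) / τ) * (1 - Real.exp (-(4 * s) / τ)) := by
        rw [I1, I2, I3]
        ring
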